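/- Let A be a unital C*-algebra, let ω : A → ℂ be a state (a linear functional with ω(a*a) real and nonnegative for all a ∈ A and ω(1) = 1), and let A₁, A₂, B₁, B₂ ∈ A be self-adjoint with Aᵢ Bⱼ = Bⱼ Aᵢ for all i, j ∈ {1,2} and A₁² = A₂² = B₁² = B₂² = 1. Then the CHSH correlation satisfies |ω(A₁B₁) + ω(A₁B₂) + ω(A₂B₁) − ω(A₂B₂)| ≤ 2√2. -/

import Mathlib

theorem chsh_ring_id {A : Type*} [Ring A] (c A₁ A₂ B₁ B₂ : A)
    (hcx : ∀ x : A, c * x = x * c) (hc2 : c * c = 2)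
    (hc11 : A₁ * B₁ = B₁ * A₁) (hc12 : A₁ * B₂ = B₂ * A₁)
    (hc21 : A₂ * B₁ = B₁ * A₂) (hc22 : A₂ * B₂ = B₂ * A₂)
    (hA₁2 : A₁ * A₁ = 1) (hA₂2 : A₂ * A₂ = 1) (hB₁2 : B₁ * B₁ = 1) (hB₂2 : B₂ * B₂ = 1) :
    (A₂ + A₁ - c * B₁) * (A₂ + A₁ - c * B₁) + (A₂ - A₁ + c * B₂) * (A₂ - A₁ + c * B₂)
      = 8 - (2 * (c * (A₁ * B₁)) + 2 * (c * (A₁ * B₂)) + 2 * (c * (A₂ * B₁))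
          - 2 * (c * (A₂ * B₂))) := by
  have h2 : ∀ x : A, x * c = c * x := fun x => (hcx x).symm
  have h1 : ∀ x y : A, x * (c * y) = c * (x * y) := fun x y => by
    rw [← mul_assoc, h2, mul_assoc]
  have e1 : (A₂ + A₁ - c * B₁) * (A₂ + A₁ - c * B₁) =
      A₂*A₂ + A₂*A₁ + A₁*A₂ + A₁*A₁ - c*(A₂*B₁) - c*(A₁*B₁) - c*(B₁*A₂) - c*(B₁*A₁)
        + c*(c*(B₁*B₁)) := by
    simp only [mul_sub, sub_mul, mul_add, add_mul, mul_assoc, h1, h2]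
    abel
  have e2 : (A₂ - A₁ + c * B₂) * (A₂ - A₁ + c * B₂) =
      A₂*A₂ - A₂*A₁ - A₁*A₂ + A₁*A₁ + c*(A₂*B₂) - c*(A₁*B₂) + c*(B₂*A₂) - c*(B₂*A₁)
        + c*(c*(B₂*B₂)) := by
    simp only [mul_sub, sub_mul, mul_add, add_mul, mul_assoc, h1, h2]
    abel
  rw [e1, e2, hA₁2, hA₂2, hB₁2, hB₂2]
  simp only [mul_one]
  rw [hc2, ← hc21, ← hc11, ← hc22, ← hc12]
  have h2' : (2:A) = 1 + 1 := by norm_num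
  have h8 : (8:A) = 1+1+1+1+1+1+1+1 := by norm_num
  rw [h2', h8]
  simp only [add_mul, one_mul]
  abel

open ComplexOrder in
theorem chsh_aux {A : Type*} [CStarAlgebra A] (ω : A →ₗ[ℂ] ℂ)
    (hpos : ∀ a : A, 0 ≤ ω (star a * a))
    (A₁ A₂ B₁ B₂ : A)
    (hA₁ : star A₁ = A₁) (hA₂ : star A₂ = A₂) (hB₁ : star B₁ = B₁) (hB₂ : star B₂ = B₂)
    (hc11 : A₁ * B₁ = B₁ * A₁) (hc12 : A₁ * B₂ = B₂ * A₁)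
    (hc21 : A₂ * B₁ = B₁ * A₂) (hc22 : A₂ * B₂ = B₂ * A₂)
    (hA₁2 : A₁ * A₁ = 1) (hA₂2 : A₂ * A₂ = 1) (hB₁2 : B₁ * B₁ = 1) (hB₂2 : B₂ * B₂ = 1) :
    ∃ z : ℂ, 0 ≤ z ∧ ω (A₁ * B₁) + ω (A₁ * B₂) + ω (A₂ * B₁) - ω (A₂ * B₂)
      = 2 * (Real.sqrt 2 : ℂ) * ω 1 - z := by
  set t : ℂ := (Real.sqrt 2 : ℂ) with ht_def
  have ht2 : t * t = 2 := by
    rw [ht_def, ← Complex.ofReal_mul, Real.mul_self_sqrt (by norm_num)]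
    norm_num
  set c : A := algebraMap ℂ A t with hc_def
  have hcx : ∀ x : A, c * x = x * c := fun x => (Algebra.commutes t x)
  have hc2 : c * c = 2 := by
    rw [hc_def, ← map_mul, ht2, map_ofNat]
  have hstarc : star c = c := by
    rw [hc_def, ← algebraMap_star_comm, ht_def]
    simp [Complex.conj_ofReal]
  set P : A := A₂ + A₁ - c * B₁ with hP
  set Q : A := A₂ - A₁ + c * B₂ with hQ
  have hPs : star P = P := by
    simp only [hP, star_sub, star_add, star_mul, hA₁, hA₂, hB₁, hstarc, ← hcx]
  have hQs : star Q = Q := by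
    simp only [hQ, star_add, star_sub, star_mul, hA₁, hA₂, hB₂, hstarc, ← hcx]
  have hid : P * P + Q * Q
      = 8 - (2 * (c * (A₁ * B₁)) + 2 * (c * (A₁ * B₂)) + 2 * (c * (A₂ * B₁))
          - 2 * (c * (A₂ * B₂))) :=
    chsh_ring_id c A₁ A₂ B₁ B₂ hcx hc2 hc11 hc12 hc21 hc22 hA₁2 hA₂2 hB₁2 hB₂2
  have hp : 0 ≤ ω (P * P) := by have := hpos P; rwa [hPs] at this
  have hq : 0 ≤ ω (Q * Q) := by have := hpos Q; rwa [hQs] at this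
  -- rewrite ω (c * x) = t * ω x
  have hωc : ∀ x : A, ω (c * x) = t * ω x := fun x => by
    rw [hc_def, ← Algebra.smul_def, map_smul, smul_eq_mul]
  have hω2 : ∀ x : A, ω (2 * x) = 2 * ω x := fun x => by
    have : (2 : A) * x = (2 : ℂ) • x := by
      rw [Algebra.smul_def, map_ofNat]
    rw [this, map_smul, smul_eq_mul]
  have h8 : ω (8 : A) = 8 * ω 1 := by
    have : (8 : A) = (8 : ℂ) • (1 : A) := by
      rw [Algebra.smul_def, map_ofNat, mul_one]
    rw [this, map_smul, smul_eq_mul]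
  have hsum : ω (P * P) + ω (Q * Q)
      = 8 * ω 1 - (2 * (t * ω (A₁ * B₁)) + 2 * (t * ω (A₁ * B₂)) + 2 * (t * ω (A₂ * B₁))
          - 2 * (t * ω (A₂ * B₂))) := by
    rw [← map_add, hid]
    rw [map_sub, map_sub, map_add, map_add, h8, hω2, hω2, hω2, hω2, hωc, hωc, hωc, hωc]
  refine ⟨t / 4 * (ω (P * P) + ω (Q * Q)), ?_, ?_⟩
  · apply mul_nonneg
    · rw [ht_def]
      rw [show ((Real.sqrt 2 : ℝ) : ℂ) / 4 = ((Real.sqrt 2 / 4 : ℝ) : ℂ) by push_cast; ring]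
      exact Complex.zero_le_real.mpr (by positivity)
    · exact add_nonneg hp hq
  · linear_combination (t / 4) * hsum -
      ((ω (A₁ * B₁) + ω (A₁ * B₂) + ω (A₂ * B₁) - ω (A₂ * B₂)) / 2) * ht2

open ComplexOrder in
/-- CHSH inequality for states: under the Cirel'son hypotheses, any state `ω`
(a positive normalized linear functional) satisfies the CHSH bound `2√2`. -/
theorem stmt13 {A : Type*} [CStarAlgebra A] (ω : A →ₗ[ℂ] ℂ)
    (hpos : ∀ a : A, 0 ≤ ω (star a * a)) (hnorm : ω 1 = 1)
    (A₁ A₂ B₁ B₂ : A)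
    (hA₁ : star A₁ = A₁) (hA₂ : star A₂ = A₂) (hB₁ : star B₁ = B₁) (hB₂ : star B₂ = B₂)
    (hc : ∀ a ∈ ({A₁, A₂} : Set A), ∀ b ∈ ({B₁, B₂} : Set A), a * b = b * a)
    (hA₁2 : A₁ * A₁ = 1) (hA₂2 : A₂ * A₂ = 1) (hB₁2 : B₁ * B₁ = 1) (hB₂2 : B₂ * B₂ = 1) :
    ‖ω (A₁ * B₁) + ω (A₁ * B₂) + ω (A₂ * B₁) - ω (A₂ * B₂)‖ ≤ 2 * Real.sqrt 2 := by
  have hc11 : A₁ * B₁ = B₁ * A₁ := hc A₁ (by simp) B₁ (by simp)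
  have hc12 : A₁ * B₂ = B₂ * A₁ := hc A₁ (by simp) B₂ (by simp)
  have hc21 : A₂ * B₁ = B₁ * A₂ := hc A₂ (by simp) B₁ (by simp)
  have hc22 : A₂ * B₂ = B₂ * A₂ := hc A₂ (by simp) B₂ (by simp)
  obtain ⟨z₁, hz₁, e₁⟩ := chsh_aux ω hpos A₁ A₂ B₁ B₂ hA₁ hA₂ hB₁ hB₂
    hc11 hc12 hc21 hc22 hA₁2 hA₂2 hB₁2 hB₂2
  obtain ⟨z₂, hz₂, e₂⟩ := chsh_aux ω hpos (-A₁) (-A₂) B₁ B₂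
    (by rw [star_neg, hA₁]) (by rw [star_neg, hA₂]) hB₁ hB₂
    (by rw [neg_mul, mul_neg, hc11]) (by rw [neg_mul, mul_neg, hc12])
    (by rw [neg_mul, mul_neg, hc21]) (by rw [neg_mul, mul_neg, hc22])
    (by rw [neg_mul_neg, hA₁2]) (by rw [neg_mul_neg, hA₂2]) hB₁2 hB₂2
  rw [hnorm, mul_one] at e₁ e₂
  simp only [neg_mul, map_neg] at e₂
  set w : ℂ := ω (A₁ * B₁) + ω (A₁ * B₂) + ω (A₂ * B₁) - ω (A₂ * B₂) with hw
  have e₂' : -w = 2 * (Real.sqrt 2 : ℂ) - z₂ := by rw [hw]; linear_combination e₂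
  rw [Complex.le_def] at hz₁ hz₂
  simp only [Complex.zero_re, Complex.zero_im] at hz₁ hz₂
  have him : w.im = 0 := by
    have := congrArg Complex.im e₁
    simpa [hz₁.2.symm] using this
  have hre1 : w.re = 2 * Real.sqrt 2 - z₁.re := by
    have := congrArg Complex.re e₁
    simpa using this
  have hre2 : -w.re = 2 * Real.sqrt 2 - z₂.re := by
    have := congrArg Complex.re e₂'
    simpa using this
  have hwre : w = ((w.re : ℝ) : ℂ) := Complex.ext rfl (by simp [him])
  rw [hwre, Complex.norm_real, Real.norm_eq_abs]
  rw [abs_le]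
  constructor
  · nlinarith [hz₂.1]
  · nlinarith [hz₁.1]
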